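/- Let W be a Weyl group with longest element w₀ and let W_e ⊇ W be a group containing it (e.g. an extended affine Weyl group with finite Weyl group W₀ and longest element w₀ of W₀). Define the Kazhdan–Lusztig two-sided preorder ≤_{LR}. Then for every z ∈ W_e there exists an element w in the set c₀ = {w | w = x·w₀·y with ℓ(w) = ℓ(x)+ℓ(w₀)+ℓ(y)} such that w ≤_{LR} z; consequently, if c₀ is a two-sided cell it is the lowest one: z ≤_{LR} w for w ∈ c₀ implies z ∈ c₀. -/

import Mathlib

/-- The Kazhdan–Lusztig two-sided preorder: `u ≤_{LR} w` is the reflexive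
transitive closure of the relation `xwy ≤_{LR} w` whenever
`ℓ(xwy) = ℓ(x) + ℓ(w) + ℓ(y)`. -/
def LowestLRle {B W : Type*} [Group W] {M : CoxeterMatrix B}
    (cs : CoxeterSystem M W) (u w : W) : Prop :=
  Relation.ReflTransGen
    (fun p q => ∃ x y : W, p = x * q * y ∧
      cs.length p = cs.length x + cs.length q + cs.length y) u w

/-- The set `c₀` of elements of the form `x ∙ w₀ ∙ y` with lengths adding. -/
def LowestCell {B W : Type*} [Group W] {M : CoxeterMatrix B}
    (cs : CoxeterSystem M W) (w₀ : W) : Set W :=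
  {w | ∃ x y : W, w = x * w₀ * y ∧
    cs.length w = cs.length x + cs.length w₀ + cs.length y}

namespace LowestCellAux

open CoxeterSystem List

variable {B W : Type*} [Group W] {M : CoxeterMatrix B} (cs : CoxeterSystem M W)

local prefix:100 "s" => cs.simple
local prefix:100 "π" => cs.wordProd
local prefix:100 "ℓ" => cs.length

noncomputable local instance : DecidableEq W := Classical.decEq W

lemma simple_conj_conj (i : B) (x : W) : s i * (s i * x * s i) * s i = x := by
  rw [← mul_assoc, ← mul_assoc, cs.simple_mul_simple_self, one_mul, mul_assoc,
    cs.simple_mul_simple_self, mul_one]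

lemma simple_sandwich_iff (j : B) (q x : W) :
    s j * q * s j = x ↔ q = s j * x * s j := by
  constructor
  · intro h; rw [← simple_conj_conj cs j q, h]
  · intro h; rw [h, simple_conj_conj]

lemma simple_conj_eq_simple_iff (i : B) (x : W) :
    s i * x * s i = s i ↔ x = s i := by
  rw [simple_sandwich_iff, cs.simple_mul_simple_self, one_mul]

/-- The basic involution used to build the reflection cocycle. -/
noncomputable def nuPerm (i : B) : Equiv.Perm (W × ZMod 2) :=
  Function.Involutive.toPerm
    (fun p => (s i * p.1 * s i, p.2 + if p.1 = s i then 1 else 0))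
    (by
      rintro ⟨x, ε⟩
      simp only
      rw [if_congr (simple_conj_eq_simple_iff cs i x) rfl rfl, simple_conj_conj cs i x,
        add_assoc]
      rcases eq_or_ne x (s i) with h1 | h1
      · simp [h1, show (1 + 1 : ZMod 2) = 0 by decide]
      · simp [h1])

@[simp] lemma nuPerm_apply (i : B) (p : W × ZMod 2) :
    nuPerm cs i p = (s i * p.1 * s i, p.2 + if p.1 = s i then 1 else 0) := rfl

lemma inv_pow_simple (i j : B) (k : ℕ) :
    ((s i * s j) ^ k)⁻¹ = (s j * s i) ^ k := by
  rw [← inv_pow, mul_inv_rev, cs.inv_simple, cs.inv_simple]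

end LowestCellAux

section generic
variable {W : Type*} [Group W]

lemma tc_pow (c t : W) (h : t * c = c⁻¹ * t) (r : ℕ) : t * c ^ r = (c ^ r)⁻¹ * t := by
  induction r with
  | zero => simp
  | succ r ih =>
    rw [pow_succ, ← mul_assoc, ih, mul_assoc, h]
    group

lemma genconj_one (c t : W) (h : t * c = c⁻¹ * t) (r : ℕ) :
    c ^ r * ((c ^ (2 * r))⁻¹ * t) * (c ^ r)⁻¹ = t := by
  calc c ^ r * ((c ^ (2 * r))⁻¹ * t) * (c ^ r)⁻¹
      = (c ^ r)⁻¹ * t * (c ^ r)⁻¹ := by rw [two_mul, pow_add]; group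
    _ = t * c ^ r * (c ^ r)⁻¹ := by rw [← tc_pow c t h r]
    _ = t := by group

lemma genconj_two (c t : W) (h : t * c = c⁻¹ * t) (r : ℕ) :
    c ^ r * ((c ^ (2 * r + 1))⁻¹ * t) * (c ^ r)⁻¹ = c⁻¹ * t := by
  calc c ^ r * ((c ^ (2 * r + 1))⁻¹ * t) * (c ^ r)⁻¹
      = c⁻¹ * ((c ^ r)⁻¹ * t * (c ^ r)⁻¹) := by rw [pow_succ, two_mul, pow_add]; group
    _ = c⁻¹ * (t * c ^ r * (c ^ r)⁻¹) := by rw [← tc_pow c t h r]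
    _ = c⁻¹ * t := by group

lemma conj_cancel_iff (c x y : W) : c * x * c⁻¹ = c * y * c⁻¹ ↔ x = y := by
  constructor
  · intro h
    have := congrArg (fun z => c⁻¹ * z * c) h
    simpa [mul_assoc] using this
  · intro h; rw [h]

end generic

namespace LowestCellAux

variable {B W : Type*} [Group W] {M : CoxeterMatrix B} (cs : CoxeterSystem M W)

local prefix:100 "s" => cs.simple
local prefix:100 "π" => cs.wordProd
local prefix:100 "ℓ" => cs.length

noncomputable local instance : DecidableEq W := Classical.decEq W

lemma sj_basic (i j : B) : s j * (s i * s j) = (s i * s j)⁻¹ * s j := by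
  rw [mul_inv_rev, cs.inv_simple, cs.inv_simple, mul_assoc]

lemma conj_pow_one (i j : B) (r : ℕ) :
    (s i * s j) ^ r * ((s j * s i) ^ (2 * r) * s j) * ((s i * s j) ^ r)⁻¹ = s j := by
  rw [← inv_pow_simple cs i j (2 * r)]
  exact genconj_one _ _ (sj_basic cs i j) r

lemma conj_pow_two (i j : B) (r : ℕ) :
    (s i * s j) ^ r * ((s j * s i) ^ (2 * r + 1) * s j) * ((s i * s j) ^ r)⁻¹
      = s j * s i * s j := by
  rw [← inv_pow_simple cs i j (2 * r + 1)]
  rw [genconj_two _ _ (sj_basic cs i j) r]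
  rw [mul_inv_rev, cs.inv_simple, cs.inv_simple, mul_assoc]

lemma nuPerm_mul_pow_apply (i j : B) (r : ℕ) (p : W × ZMod 2) :
    ((nuPerm cs i * nuPerm cs j) ^ r) p =
      ((s i * s j) ^ r * p.1 * ((s i * s j) ^ r)⁻¹,
        p.2 + ∑ k ∈ Finset.range (2 * r),
          if p.1 = (s j * s i) ^ k * s j then 1 else 0) := by
  induction r with
  | zero => simp
  | succ r ih =>
    rw [pow_succ', Equiv.Perm.mul_apply, ih]
    rw [Equiv.Perm.mul_apply, nuPerm_apply, nuPerm_apply]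
    have cond1 : ((s i * s j) ^ r * p.1 * ((s i * s j) ^ r)⁻¹ = s j)
        ↔ (p.1 = (s j * s i) ^ (2 * r) * s j) := by
      constructor
      · intro h
        exact (conj_cancel_iff ((s i * s j) ^ r) _ _).mp
          (h.trans (conj_pow_one cs i j r).symm)
      · intro h
        rw [h]; exact conj_pow_one cs i j r
    have cond2 : (s j * ((s i * s j) ^ r * p.1 * ((s i * s j) ^ r)⁻¹) * s j = s i)
        ↔ (p.1 = (s j * s i) ^ (2 * r + 1) * s j) := by
      rw [simple_sandwich_iff]
      have h2 : s j * s i * s j = s j * (s i * s j) := by group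
      constructor
      · intro h
        refine (conj_cancel_iff ((s i * s j) ^ r) _ _).mp ?_
        rw [conj_pow_two cs i j r, h, h2]
      · intro h
        rw [h, conj_pow_two cs i j r, h2]
    rw [if_congr cond1 rfl rfl, if_congr cond2 rfl rfl]
    have hrange : 2 * (r + 1) = (2 * r) + 1 + 1 := by ring
    rw [hrange, Finset.sum_range_succ, Finset.sum_range_succ]
    refine Prod.ext ?_ ?_
    · simp only
      rw [inv_pow_simple cs i j (r + 1), inv_pow_simple cs i j r, pow_succ' (s i * s j),
        pow_succ (s j * s i)]
      simp only [mul_assoc]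
    · simp only
      ring

lemma nuPerm_liftable : M.IsLiftable (nuPerm cs) := by
  intro i j
  apply Equiv.ext
  intro p
  have h1 : (s i * s j) ^ M i j = 1 := cs.simple_mul_simple_pow i j
  have h2 : (s j * s i) ^ M i j = 1 := cs.simple_mul_simple_pow' i j
  have hsum : (∑ k ∈ Finset.range (2 * M i j),
      if p.1 = (s j * s i) ^ k * s j then (1 : ZMod 2) else 0) = 0 := by
    rw [two_mul, Finset.sum_range_add]
    have hper : ∀ k, (s j * s i) ^ (M i j + k) = (s j * s i) ^ k := by
      intro k; rw [pow_add, h2, one_mul]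
    simp only [hper]
    exact (show ∀ x : ZMod 2, x + x = 0 by decide) _
  rw [nuPerm_mul_pow_apply, h1, hsum]
  simp

end LowestCellAux

namespace LowestCellAux

variable {B W : Type*} [Group W] {M : CoxeterMatrix B} (cs : CoxeterSystem M W)

local prefix:100 "s" => cs.simple
local prefix:100 "π" => cs.wordProd
local prefix:100 "ℓ" => cs.length

noncomputable local instance : DecidableEq W := Classical.decEq W

/-- The homomorphism underlying the reflection cocycle. -/
noncomputable def nuHom : W →* Equiv.Perm (W × ZMod 2) :=
  cs.lift ⟨nuPerm cs, nuPerm_liftable cs⟩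

/-- The reflection cocycle: `nu cs w t` is `1` iff `t` is a "right inversion with
multiplicity" of `w`. -/
noncomputable def nu (w t : W) : ZMod 2 := ((nuHom cs w) (t, 0)).2

lemma nuHom_simple (i : B) : nuHom cs (s i) = nuPerm cs i :=
  cs.lift_apply_simple (nuPerm_liftable cs) i

lemma nuHom_apply (w : W) : ∀ p : W × ZMod 2,
    (nuHom cs w) p = (w * p.1 * w⁻¹, p.2 + nu cs w p.1) := by
  induction w using cs.simple_induction_left with
  | one =>
    intro p
    have h1 : nuHom cs (1 : W) = 1 := map_one _
    simp [h1, nu]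
  | mul_simple_left w i ih =>
    intro p
    have hmul : nuHom cs (s i * w) = nuHom cs (s i) * nuHom cs w := map_mul _ _ _
    have key : ∀ q : W × ZMod 2, (nuHom cs (s i * w)) q
        = (s i * w * q.1 * w⁻¹ * s i,
            q.2 + nu cs w q.1 + if w * q.1 * w⁻¹ = s i then 1 else 0) := by
      intro q
      rw [hmul, Equiv.Perm.mul_apply, ih q, nuHom_simple, nuPerm_apply]
      simp only
      refine Prod.ext ?_ ?_
      · simp only [mul_inv_rev, cs.inv_simple, mul_assoc]
      · simp only [add_assoc]
    rw [key p]
    have hnu : nu cs (s i * w) p.1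
        = nu cs w p.1 + if w * p.1 * w⁻¹ = s i then 1 else 0 := by
      show ((nuHom cs (s i * w)) (p.1, 0)).2 = _
      rw [key (p.1, 0)]
      simp
    rw [hnu]
    refine Prod.ext ?_ ?_
    · simp only [mul_inv_rev, cs.inv_simple, mul_assoc]
    · simp only [add_assoc]

lemma nu_cocycle (u v t : W) : nu cs (u * v) t = nu cs v t + nu cs u (v * t * v⁻¹) := by
  have h : (nuHom cs (u * v)) (t, 0) = (nuHom cs u) ((nuHom cs v) (t, 0)) := by
    rw [map_mul]; rfl
  have h2 := nuHom_apply cs v (t, 0)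
  have h3 := nuHom_apply cs u (v * t * v⁻¹, nu cs v t)
  unfold nu
  rw [h, h2]
  simp only [zero_add] at *
  rw [h3]
  rfl

lemma nu_one (t : W) : nu cs 1 t = 0 := by
  unfold nu
  rw [map_one]
  rfl

lemma nu_simple (i : B) (t : W) : nu cs (s i) t = if t = s i then 1 else 0 := by
  unfold nu
  rw [nuHom_simple, nuPerm_apply]
  simp

lemma nu_wordProd (ω : List B) (t : W) :
    nu cs (π ω) t = ((cs.rightInvSeq ω).map
      (fun x => if t = x then (1 : ZMod 2) else 0)).sum := by
  induction ω with
  | nil => simp [nu_one]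
  | cons i ω ih =>
    rw [cs.wordProd_cons, nu_cocycle, ih]
    show _ = (((π ω)⁻¹ * s i * π ω :: cs.rightInvSeq ω).map _).sum
    rw [List.map_cons, List.sum_cons]
    rw [nu_simple]
    have hiff : (π ω * t * (π ω)⁻¹ = s i) ↔ (t = (π ω)⁻¹ * s i * π ω) := by
      constructor
      · intro h
        have := congrArg (fun z => (π ω)⁻¹ * z * π ω) h
        simpa [mul_assoc] using this
      · intro h
        rw [h]
        simp [mul_assoc]
    rw [if_congr hiff rfl rfl]
    ring


lemma zmod2_cases (x : ZMod 2) : x = 0 ∨ x = 1 := by revert x; decide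

lemma mem_rightInvSeq_of_nu_eq_one {ω : List B} {t : W} (h : nu cs (π ω) t = 1) :
    t ∈ cs.rightInvSeq ω := by
  by_contra hmem
  rw [nu_wordProd] at h
  have : ((cs.rightInvSeq ω).map (fun x => if t = x then (1 : ZMod 2) else 0)).sum = 0 := by
    apply List.sum_eq_zero
    intro x hx
    obtain ⟨y, hy, rfl⟩ := List.mem_map.mp hx
    have : t ≠ y := fun h' => hmem (h' ▸ hy)
    simp [this]
  rw [this] at h
  exact one_ne_zero h.symm

/-- If `ν(w,t) = 1` then right multiplication by `t` decreases length. -/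
lemma length_lt_of_nu_eq_one {w t : W} (h : nu cs w t = 1) : ℓ (w * t) < ℓ w := by
  obtain ⟨ω, hred, rfl⟩ := cs.exists_reduced_word' w
  have hmem := mem_rightInvSeq_of_nu_eq_one cs h
  obtain ⟨j, hj, rfl⟩ := List.mem_iff_getElem.mp hmem
  rw [← List.getD_eq_getElem _ 1 hj, cs.wordProd_mul_getD_rightInvSeq]
  rw [cs.length_rightInvSeq] at hj
  calc ℓ (π (ω.eraseIdx j)) ≤ (ω.eraseIdx j).length := cs.length_wordProd_le _
    _ < ω.length := by rw [← List.length_eraseIdx_add_one hj]; omega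
    _ = ℓ (π ω) := hred.symm

lemma nu_self {t : W} (ht : cs.IsReflection t) : nu cs t t = 1 := by
  obtain ⟨a, i, rfl⟩ := ht
  generalize hT : a * s i * a⁻¹ = t
  have e1 : a * (s i * a⁻¹) = t := by rw [← hT]; group
  have step1 := nu_cocycle cs a (s i * a⁻¹) t
  rw [e1] at step1
  have e2 : s i * a⁻¹ * t * (s i * a⁻¹)⁻¹ = s i := by rw [← hT]; group
  have step2 := nu_cocycle cs (s i) a⁻¹ t
  rw [inv_inv] at step2
  have e3 : a⁻¹ * t * a = s i := by rw [← hT]; group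
  have e4 : nu cs (s i) (s i) = 1 := by rw [nu_simple]; simp
  have step3 := nu_cocycle cs a a⁻¹ t
  rw [mul_inv_cancel, nu_one, inv_inv, e3] at step3
  rw [step1, e2, step2, e3, e4]
  rcases zmod2_cases (nu cs a⁻¹ t) with h | h <;>
    rcases zmod2_cases (nu cs a (s i)) with h' | h' <;>
      rw [h, h'] at step3 ⊢ <;> first | decide | (exfalso; revert step3; decide)

/-- Characterization: for a reflection `t`, `ℓ(wt) < ℓ(w)` iff `ν(w,t) = 1`. -/
lemma nu_eq_one_iff {t : W} (ht : cs.IsReflection t) (w : W) :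
    ℓ (w * t) < ℓ w ↔ nu cs w t = 1 := by
  constructor
  · intro hlt
    have key : nu cs w t = 1 + nu cs (w * t) t := by
      have := nu_cocycle cs (w * t) t t
      rw [show t * t * t⁻¹ = t by rw [ht.mul_self, one_mul, ht.inv]] at this
      rw [show w * t * t = w by rw [mul_assoc, ht.mul_self, mul_one]] at this
      rw [this, nu_self cs ht]
    rcases zmod2_cases (nu cs (w * t) t) with h | h
    · rw [key, h]; decide
    · exfalso
      have := length_lt_of_nu_eq_one cs h
      rw [mul_assoc, ht.mul_self, mul_one] at this
      omega
  · exact length_lt_of_nu_eq_one cs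

/-- Strong exchange property. -/
lemma strong_exchange {ω : List B} (hred : cs.IsReduced ω) {t : W} (ht : cs.IsReflection t)
    (hlt : ℓ (π ω * t) < ℓ (π ω)) :
    ∃ j, ∃ hj : j < ω.length, π ω * t = π (ω.eraseIdx j) := by
  have h1 : nu cs (π ω) t = 1 := (nu_eq_one_iff cs ht _).mp hlt
  have hmem := mem_rightInvSeq_of_nu_eq_one cs h1
  obtain ⟨j, hj, hjt⟩ := List.mem_iff_getElem.mp hmem
  rw [cs.length_rightInvSeq] at hj
  refine ⟨j, hj, ?_⟩
  rw [← hjt, ← List.getD_eq_getElem _ 1, cs.wordProd_mul_getD_rightInvSeq]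


/-! ### Deletion -/

lemma deletion {ω : List B} (h : ¬ cs.IsReduced ω) :
    ∃ ω' : List B, π ω' = π ω ∧ ω'.length + 2 = ω.length ∧ ∀ i ∈ ω', i ∈ ω := by
  have hlen : ℓ (π ω) < ω.length := lt_of_le_of_ne (cs.length_wordProd_le ω) h
  have hpos : 1 ≤ ω.length := by omega
  have hex : ∃ j, ¬ cs.IsReduced (ω.take (j + 1)) := by
    refine ⟨ω.length - 1, ?_⟩
    rwa [show ω.length - 1 + 1 = ω.length by omega, List.take_length]
  classical
  let j := Nat.find hex
  have hj : ¬ cs.IsReduced (ω.take (j + 1)) := Nat.find_spec hex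
  have hjle : j ≤ ω.length - 1 := Nat.find_min' hex (by
    rwa [show ω.length - 1 + 1 = ω.length by omega, List.take_length])
  have hjlt : j < ω.length := by omega
  have hjred : cs.IsReduced (ω.take j) := by
    rcases Nat.eq_zero_or_pos j with h0 | h0
    · rw [h0]
      simp [CoxeterSystem.IsReduced]
    · have := Nat.find_min hex (show j - 1 < j by omega)
      rwa [not_not, show j - 1 + 1 = j by omega] at this
  have hw'len : ℓ (π (ω.take j)) = j := by
    have := hjred
    rwa [CoxeterSystem.IsReduced, List.length_take, min_eq_left (by omega)] at this
  have htk : ω.take (j + 1) = ω.take j ++ [ω[j]] := by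
    rw [List.take_succ, List.getElem?_eq_getElem hjlt]
    rfl
  have hprod : π (ω.take (j + 1)) = π (ω.take j) * s ω[j] := by
    rw [htk, cs.wordProd_append, cs.wordProd_singleton]
  have hlt : ℓ (π (ω.take j) * s ω[j]) < ℓ (π (ω.take j)) := by
    have h1 : ℓ (π (ω.take (j + 1))) < j + 1 := by
      refine lt_of_le_of_ne ?_ ?_
      · calc ℓ (π (ω.take (j + 1))) ≤ (ω.take (j + 1)).length := cs.length_wordProd_le _
          _ = j + 1 := by rw [List.length_take]; omega
      · intro he
        apply hj
        rw [CoxeterSystem.IsReduced, he, List.length_take]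
        omega
    rw [hprod] at h1
    rcases cs.length_mul_simple (π (ω.take j)) ω[j] with h2 | h2 <;> omega
  obtain ⟨k, hk, hdel⟩ := strong_exchange cs hjred (cs.isReflection_simple ω[j]) hlt
  refine ⟨(ω.take j).eraseIdx k ++ ω.drop (j + 1), ?_, ?_, ?_⟩
  · rw [cs.wordProd_append, ← hdel, ← hprod, ← cs.wordProd_append, List.take_append_drop]
  · have h5 : ((ω.take j).eraseIdx k).length + 1 = (ω.take j).length :=
      List.length_eraseIdx_add_one hk
    rw [List.length_append, List.length_drop]
    rw [List.length_take, min_eq_left (by omega)] at h5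
    omega
  · intro i hi
    rcases List.mem_append.mp hi with h6 | h6
    · exact List.take_subset j ω (List.eraseIdx_subset h6)
    · exact List.drop_subset _ ω h6

/-! ### Standard parabolic subgroups -/

variable (S₀ : Set B)

lemma wordProd_mem_closure {ω : List B} (hω : ∀ i ∈ ω, i ∈ S₀) :
    π ω ∈ Subgroup.closure (cs.simple '' S₀) := by
  induction ω with
  | nil => rw [cs.wordProd_nil]; exact one_mem _
  | cons i ω ih =>
    rw [cs.wordProd_cons]
    exact mul_mem (Subgroup.subset_closure ⟨i, hω i List.mem_cons_self, rfl⟩)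
      (ih fun i hi => hω i (List.mem_cons_of_mem _ hi))

lemma exists_word_of_mem_closure {v : W} (hv : v ∈ Subgroup.closure (cs.simple '' S₀)) :
    ∃ ω : List B, (∀ i ∈ ω, i ∈ S₀) ∧ v = π ω := by
  induction hv using Subgroup.closure_induction with
  | mem x hx =>
    obtain ⟨i, hi, rfl⟩ := hx
    exact ⟨[i], by simpa using hi, (cs.wordProd_singleton i).symm⟩
  | one => exact ⟨[], by simp, by simp⟩
  | mul x y hx hy ihx ihy =>
    obtain ⟨ω₁, h1, rfl⟩ := ihx
    obtain ⟨ω₂, h2, rfl⟩ := ihy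
    exact ⟨ω₁ ++ ω₂, fun i hi => by
      rcases List.mem_append.mp hi with h | h
      exacts [h1 i h, h2 i h], (cs.wordProd_append ω₁ ω₂).symm⟩
  | inv x hx ih =>
    obtain ⟨ω, h1, rfl⟩ := ih
    exact ⟨ω.reverse, fun i hi => h1 i (List.mem_reverse.mp hi),
      (cs.wordProd_reverse ω).symm⟩

lemma exists_reduced_word_subset :
    ∀ n (ω : List B), ω.length ≤ n → (∀ i ∈ ω, i ∈ S₀) →
      ∃ ω' : List B, (∀ i ∈ ω', i ∈ S₀) ∧ cs.IsReduced ω' ∧ π ω' = π ω := by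
  intro n
  induction n with
  | zero =>
    intro ω hl _
    rw [Nat.le_zero, List.length_eq_zero_iff] at hl
    exact ⟨[], by simp, by simp [CoxeterSystem.IsReduced], by rw [hl]⟩
  | succ n ih =>
    intro ω hl hS
    by_cases hred : cs.IsReduced ω
    · exact ⟨ω, hS, hred, rfl⟩
    · obtain ⟨ω'', hprod, hlen, hmem⟩ := deletion cs hred
      obtain ⟨ω', h1, h2, h3⟩ := ih ω'' (by omega) (fun i hi => hS i (hmem i hi))
      exact ⟨ω', h1, h2, by rw [h3, hprod]⟩

lemma peel {v : W} (hv : v ∈ Subgroup.closure (cs.simple '' S₀)) (hne : v ≠ 1) :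
    ∃ i ∈ S₀, ∃ v', v' ∈ Subgroup.closure (cs.simple '' S₀) ∧
      v = s i * v' ∧ ℓ v' + 1 = ℓ v := by
  obtain ⟨ω₀, hS₀, rfl⟩ := exists_word_of_mem_closure cs S₀ hv
  obtain ⟨ω, hS, hred, hprod⟩ := exists_reduced_word_subset cs S₀ ω₀.length ω₀ le_rfl hS₀
  rw [← hprod] at hne ⊢
  cases ω with
  | nil => exact absurd (cs.wordProd_nil) hne
  | cons i rest =>
    refine ⟨i, hS i List.mem_cons_self, π rest,
      wordProd_mem_closure cs S₀ (fun i hi => hS i (List.mem_cons_of_mem _ hi)),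
      cs.wordProd_cons i rest, ?_⟩
    have h1 : ℓ (π (i :: rest)) = rest.length + 1 := by
      rw [hred]; simp
    have h2 : ℓ (π rest) ≤ rest.length := cs.length_wordProd_le rest
    have h3 : ℓ (π (i :: rest)) ≤ 1 + ℓ (π rest) := by
      rw [cs.wordProd_cons]
      calc ℓ (s i * π rest) ≤ ℓ (s i) + ℓ (π rest) := cs.length_mul_le _ _
        _ = 1 + ℓ (π rest) := by rw [cs.length_simple]
    omega


lemma nu_inv_simple_eq_zero {v' : W} {i : B} (h : ℓ (s i * v') = ℓ v' + 1) :
    nu cs v'⁻¹ (s i) = 0 := by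
  rcases zmod2_cases (nu cs v'⁻¹ (s i)) with h0 | h0
  · exact h0
  · exfalso
    have hlt := length_lt_of_nu_eq_one cs h0
    have he : v'⁻¹ * s i = (s i * v')⁻¹ := by
      rw [mul_inv_rev, cs.inv_simple]
    rw [he, cs.length_inv, cs.length_inv, h] at hlt
    omega

section parabolic

variable {S₀ : Set B} {w₀ : W}
  (hw₀ : w₀ ∈ Subgroup.closure (cs.simple '' S₀))
  (hmax : ∀ u ∈ Subgroup.closure (cs.simple '' S₀), cs.length u ≤ cs.length w₀)

include hw₀ hmax in
lemma nu_w0_eq_one {t : W} (ht : cs.IsReflection t)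
    (htP : t ∈ Subgroup.closure (cs.simple '' S₀)) : nu cs w₀ t = 1 := by
  refine (nu_eq_one_iff cs ht w₀).mp ?_
  exact lt_of_le_of_ne (hmax _ (mul_mem hw₀ htP)) (ht.length_mul_left_ne w₀)

include hw₀ hmax in
/-- The longest element property : `ℓ(w₀ v⁻¹) + ℓ(v) = ℓ(w₀)` for `v` in the parabolic. -/
lemma length_w0_mul_inv :
    ∀ n (v : W), ℓ v ≤ n → v ∈ Subgroup.closure (cs.simple '' S₀) →
      ℓ (w₀ * v⁻¹) + ℓ v = ℓ w₀ := by
  intro n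
  induction n with
  | zero =>
    intro v hn hv
    have : v = 1 := by
      rw [← cs.length_eq_zero_iff]; omega
    simp [this]
  | succ n ih =>
    intro v hn hv
    by_cases hne : v = 1
    · simp [hne]
    · obtain ⟨i, hiS, v', hv', hvep, hlen⟩ := peel cs S₀ hv hne
      have hsimple_mem : s i ∈ Subgroup.closure (cs.simple '' S₀) :=
        Subgroup.subset_closure ⟨i, hiS, rfl⟩
      have hih := ih v' (by omega) hv'
      have hsplit : w₀ * v⁻¹ = (w₀ * v'⁻¹) * s i := by
        rw [hvep, mul_inv_rev, cs.inv_simple, mul_assoc]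
      have hnu : nu cs (w₀ * v'⁻¹) (s i) = 1 := by
        rw [nu_cocycle cs w₀ v'⁻¹ (s i), inv_inv]
        have h0 : nu cs v'⁻¹ (s i) = 0 :=
          nu_inv_simple_eq_zero cs (show ℓ (s i * v') = ℓ v' + 1 by rw [← hvep]; omega)
        have h1 : nu cs w₀ (v'⁻¹ * s i * v') = 1 := by
          refine nu_w0_eq_one cs hw₀ hmax ?_ ?_
          · have := (cs.isReflection_simple i).conj v'⁻¹
            rwa [inv_inv] at this
          · exact mul_mem (mul_mem (inv_mem hv') hsimple_mem) hv'
        rw [h0, h1, zero_add]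
      have hdesc := length_lt_of_nu_eq_one cs hnu
      rcases cs.length_mul_simple (w₀ * v'⁻¹) i with h2 | h2
      · omega
      · rw [hsplit]
        omega

end parabolic

lemma length_min_coset {S₀ : Set B} {z₀ : W}
    (hmin : ∀ p ∈ Subgroup.closure (cs.simple '' S₀), ℓ z₀ ≤ ℓ (p * z₀)) :
    ∀ n (v : W), ℓ v ≤ n → v ∈ Subgroup.closure (cs.simple '' S₀) →
      ℓ (v * z₀) = ℓ v + ℓ z₀ := by
  intro n
  induction n with
  | zero =>
    intro v hn hv
    have : v = 1 := by rw [← cs.length_eq_zero_iff]; omega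
    simp [this]
  | succ n ih =>
    intro v hn hv
    by_cases hne : v = 1
    · simp [hne]
    · obtain ⟨i, hiS, v', hv', hvep, hlen⟩ := peel cs S₀ hv hne
      have hsimple_mem : s i ∈ Subgroup.closure (cs.simple '' S₀) :=
        Subgroup.subset_closure ⟨i, hiS, rfl⟩
      have hih := ih v' (by omega) hv'
      rcases cs.length_simple_mul (v' * z₀) i with h2 | h2
      · rw [hvep, mul_assoc, h2]
        rw [hvep] at hlen
        omega
      · exfalso
        have hdesc : ℓ ((v' * z₀)⁻¹ * s i) < ℓ ((v' * z₀)⁻¹) := by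
          have he : (v' * z₀)⁻¹ * s i = (s i * (v' * z₀))⁻¹ := by
            rw [mul_inv_rev (s i) (v' * z₀), cs.inv_simple]
          rw [he, cs.length_inv, cs.length_inv]
          omega
        have hnu : nu cs ((v' * z₀)⁻¹) (s i) = 1 :=
          (nu_eq_one_iff cs (cs.isReflection_simple i) _).mp hdesc
        have hsplitinv : (v' * z₀)⁻¹ = z₀⁻¹ * v'⁻¹ := by rw [mul_inv_rev]
        rw [hsplitinv, nu_cocycle cs z₀⁻¹ v'⁻¹ (s i), inv_inv] at hnu
        have h0 : nu cs v'⁻¹ (s i) = 0 := by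
          refine nu_inv_simple_eq_zero cs ?_
          rw [← hvep]; omega
        have h1 : nu cs z₀⁻¹ (v'⁻¹ * s i * v') = 0 := by
          rcases zmod2_cases (nu cs z₀⁻¹ (v'⁻¹ * s i * v')) with h3 | h3
          · exact h3
          · exfalso
            have ht : cs.IsReflection (v'⁻¹ * s i * v') := by
              have := (cs.isReflection_simple i).conj v'⁻¹
              rwa [inv_inv] at this
            have hlt := length_lt_of_nu_eq_one cs h3
            have he : z₀⁻¹ * (v'⁻¹ * s i * v') = ((v'⁻¹ * s i * v') * z₀)⁻¹ := by
              rw [mul_inv_rev, ht.inv]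
            rw [he, cs.length_inv, cs.length_inv] at hlt
            have hmem : v'⁻¹ * s i * v' ∈ Subgroup.closure (cs.simple '' S₀) :=
              mul_mem (mul_mem (inv_mem hv') (Subgroup.subset_closure ⟨i, hiS, rfl⟩)) hv'
            have := hmin _ hmem
            omega
        rw [h0, h1] at hnu
        exact absurd hnu (by decide)

end LowestCellAux



/-- Let `W₀` be a finite standard parabolic subgroup with longest element `w₀`.
Every element of the group dominates (for `≤_{LR}`) an element of
`c₀ = {x ∙ w₀ ∙ y}`; consequently `c₀` is the lowest two-sided cell: anything
`≤_{LR}` an element of `c₀` lies in `c₀`. -/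
theorem lowest_two_sided_cell
    {B W : Type*} [Group W] {M : CoxeterMatrix B} (cs : CoxeterSystem M W)
    (S₀ : Set B)
    (hfin : (Subgroup.closure (cs.simple '' S₀) : Set W).Finite)
    (w₀ : W) (hw₀ : w₀ ∈ Subgroup.closure (cs.simple '' S₀))
    (hmax : ∀ u ∈ Subgroup.closure (cs.simple '' S₀), cs.length u ≤ cs.length w₀) :
    (∀ z : W, ∃ w ∈ LowestCell cs w₀, LowestLRle cs w z) ∧
      (∀ z w : W, w ∈ LowestCell cs w₀ → LowestLRle cs z w →
        z ∈ LowestCell cs w₀) := by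
  classical
  constructor
  · -- every element dominates an element of the lowest cell
    intro z
    have hCfin : ((fun p => p * z) '' ((Subgroup.closure (cs.simple '' S₀) : Subgroup W) :
        Set W)).Finite := hfin.image _
    have hCne : ((fun p => p * z) '' ((Subgroup.closure (cs.simple '' S₀) : Subgroup W) :
        Set W)).Nonempty := ⟨z, 1, Subgroup.one_mem _, one_mul z⟩
    obtain ⟨z₀, ⟨u, huP, huz⟩, hminC⟩ := Set.exists_min_image _ cs.length hCfin hCne
    simp only at huz
    have hmin : ∀ p ∈ Subgroup.closure (cs.simple '' S₀),
        cs.length z₀ ≤ cs.length (p * z₀) := by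
      intro p hp
      refine hminC (p * z₀) ⟨p * u, mul_mem hp huP, ?_⟩
      simp only
      rw [mul_assoc, huz]
    have hF2 : ∀ v ∈ Subgroup.closure (cs.simple '' S₀),
        cs.length (v * z₀) = cs.length v + cs.length z₀ := fun v hv =>
      LowestCellAux.length_min_coset cs hmin (cs.length v) v le_rfl hv
    have hF3 : ∀ v ∈ Subgroup.closure (cs.simple '' S₀),
        cs.length (w₀ * v⁻¹) + cs.length v = cs.length w₀ := fun v hv =>
      LowestCellAux.length_w0_mul_inv cs hw₀ hmax (cs.length v) v le_rfl hv
    have hz : z = u⁻¹ * z₀ := by rw [← huz, inv_mul_cancel_left]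
    have e1 : cs.length (w₀ * u) + cs.length u = cs.length w₀ := by
      have := hF3 u⁻¹ (inv_mem huP)
      rwa [inv_inv, cs.length_inv] at this
    have e2 : cs.length z = cs.length u + cs.length z₀ := by
      rw [hz]
      have := hF2 u⁻¹ (inv_mem huP)
      rwa [cs.length_inv] at this
    have e3 : cs.length (w₀ * z₀) = cs.length w₀ + cs.length z₀ := hF2 w₀ hw₀
    refine ⟨w₀ * z₀, ⟨1, z₀, by rw [one_mul], by rw [cs.length_one, e3]; omega⟩, ?_⟩
    refine Relation.ReflTransGen.single ⟨w₀ * u, 1, ?_, ?_⟩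
    · rw [mul_one, mul_assoc, huz]
    · rw [cs.length_one, e3, e2]
      omega
  · -- anything below the lowest cell is in the lowest cell
    intro z w hw hle
    have hle' : Relation.ReflTransGen
        (fun p q => ∃ x y : W, p = x * q * y ∧
          cs.length p = cs.length x + cs.length q + cs.length y) z w := hle
    clear hle
    induction hle' using Relation.ReflTransGen.head_induction_on with
    | refl => exact hw
    | head hstep hrest ih =>
      obtain ⟨x, y, hpe, hple⟩ := hstep
      obtain ⟨a, b, hqe, hqle⟩ := ih
      refine ⟨x * a, b * y, ?_, ?_⟩
      · rw [hpe, hqe]; group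
      · have t1 : cs.length (x * a) ≤ cs.length x + cs.length a := cs.length_mul_le x a
        have t2 : cs.length (b * y) ≤ cs.length b + cs.length y := cs.length_mul_le b y
        have t3 : cs.length ((x * a) * w₀ * (b * y))
            ≤ cs.length (x * a) + cs.length w₀ + cs.length (b * y) := by
          calc cs.length ((x * a) * w₀ * (b * y))
              ≤ cs.length ((x * a) * w₀) + cs.length (b * y) := cs.length_mul_le _ _
            _ ≤ cs.length (x * a) + cs.length w₀ + cs.length (b * y) := by
                have := cs.length_mul_le (x * a) w₀
                omega
        have h4 : (x * a) * w₀ * (b * y) = x * (a * w₀ * b) * y := by group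
        rw [h4, ← hqe, ← hpe] at t3
        omega
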